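/- Let t ≥ 1, ℓ ≥ 3 and let H be a disjoint union of paths with longest path of order exactly (t-1)(ℓ-1) + ℓ - 2. If K_1 ∨ H contains no B_{tℓ}, then the second longest path of H has order at most ℓ - 2. -/

import Mathlib

open SimpleGraph Matrix

/-- `H` is a minor of `G`: branch sets are connected, pairwise disjoint, and
edges of `H` are represented by edges between branch sets. -/
def MinorOf {α : Type*} {β : Type*} (H : SimpleGraph α) (G : SimpleGraph β) : Prop :=
  ∃ f : α → Set β,
    (∀ a, (G.induce (f a)).Connected) ∧
    (Pairwise fun a b => Disjoint (f a) (f b)) ∧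
    ∀ a b, H.Adj a b → ∃ u ∈ f a, ∃ v ∈ f b, G.Adj u v

/-- A graph is outerplanar iff it has no `K₄`-minor and no `K_{2,3}`-minor. -/
def Outerplanar {β : Type*} (G : SimpleGraph β) : Prop :=
  ¬ MinorOf (completeGraph (Fin 4)) G ∧ ¬ MinorOf (completeBipartiteGraph (Fin 2) (Fin 3)) G

/-- The join `G ∨ H` of two graphs. -/
def graphJoin {α β : Type*} (G : SimpleGraph α) (H : SimpleGraph β) : SimpleGraph (α ⊕ β) where
  Adj x y :=
    match x, y with
    | Sum.inl a, Sum.inl b => G.Adj a b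
    | Sum.inr a, Sum.inr b => H.Adj a b
    | Sum.inl _, Sum.inr _ => True
    | Sum.inr _, Sum.inl _ => True
  symm := by refine ⟨?_⟩; rintro (a|a) (b|b) h <;> first | exact h.symm | trivial
  loopless := by
    refine ⟨?_⟩
    rintro (a|a) h
    · exact G.loopless.irrefl a h
    · exact H.loopless.irrefl a h

open scoped Classical in
/-- The adjacency spectral radius of a finite graph. -/
noncomputable def specRad {V : Type*} [Fintype V] [DecidableEq V]
    (G : SimpleGraph V) : ℝ :=
  sSup (spectrum ℝ (G.adjMatrix ℝ))

/-- The disjoint union of paths with orders given by the list `L`. -/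
def pathsUnion (L : List ℕ) : SimpleGraph (Σ i : Fin L.length, Fin (L.get i)) where
  Adj x y := x.1 = y.1 ∧ (x.2.val + 1 = y.2.val ∨ y.2.val + 1 = x.2.val)
  symm := by refine ⟨?_⟩; rintro ⟨i, a⟩ ⟨j, b⟩ ⟨h1, h2⟩; exact ⟨h1.symm, h2.symm⟩
  loopless := by refine ⟨?_⟩; rintro ⟨i, a⟩ ⟨-, h⟩; rcases h with h | h <;> omega

/-- `B_{tl}`: `t` edge-disjoint `l`-cycles sharing exactly one common vertex (`none`). -/
def bouquet (t l : ℕ) : SimpleGraph (Option (Fin t × Fin (l - 1))) where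
  Adj x y :=
    match x, y with
    | none, none => False
    | none, some p => p.2.val = 0 ∨ p.2.val = l - 2
    | some p, none => p.2.val = 0 ∨ p.2.val = l - 2
    | some p, some q => p.1 = q.1 ∧ (p.2.val + 1 = q.2.val ∨ q.2.val + 1 = p.2.val)
  symm := by
    refine ⟨?_⟩
    rintro (_|p) (_|q) h
    · exact h
    · exact h
    · exact h
    · exact ⟨h.1.symm, h.2.symm⟩
  loopless := by
    refine ⟨?_⟩
    rintro (_|p) h
    · exact h
    · rcases h.2 with h' | h' <;> omega

/-- `F` occurs as a subgraph of `G`. -/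
def ContainsSubgraph {α β : Type*} (F : SimpleGraph α) (G : SimpleGraph β) : Prop :=
  ∃ f : F →g G, Function.Injective f

/-- `G` has a matching of size `k`. -/
def HasMatching {V : Type*} (G : SimpleGraph V) (k : ℕ) : Prop :=
  ∃ M : Finset (Sym2 V), M.card = k ∧ ↑M ⊆ G.edgeSet ∧
    (M : Set (Sym2 V)).Pairwise fun e f => ∀ v, v ∈ e → v ∉ f

/-- A linear forest: a disjoint union of (possibly trivial) paths. -/
def IsLinearForest {V : Type*} (H : SimpleGraph V) : Prop :=
  H.IsAcyclic ∧ ∀ v, (H.neighborSet v).ncard ≤ 2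

/-- `G` contains a cycle of length `l`. -/
def HasCycleLength {V : Type*} (G : SimpleGraph V) (l : ℕ) : Prop :=
  ∃ (u : V) (w : G.Walk u u), w.IsCycle ∧ w.length = l

/-- Decomposition of `a*n+b` with `b < n`. -/
lemma nat_mul_add_inj (n a b c d : ℕ) (hb : b < n) (hd : d < n)
    (h : a * n + b = c * n + d) : a = c ∧ b = d := by
  have hn : 0 < n := Nat.pos_of_ne_zero (by omega)
  constructor
  · have h1 : (a * n + b) / n = a := by
      rw [mul_comm, Nat.mul_add_div hn, Nat.div_eq_of_lt hb]; omega
    have h2 : (c * n + d) / n = c := by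
      rw [mul_comm, Nat.mul_add_div hn, Nat.div_eq_of_lt hd]; omega
    rw [← h1, ← h2, h]
  · have h1 : (a * n + b) % n = b := by
      rw [mul_comm, Nat.mul_add_mod, Nat.mod_eq_of_lt hb]
    have h2 : (c * n + d) % n = d := by
      rw [mul_comm, Nat.mul_add_mod, Nat.mod_eq_of_lt hd]
    rw [← h1, ← h2, h]

lemma bound1 (t l i j : ℕ) (hl : 3 ≤ l) (hi : i < t - 1) (hj : j < l - 1) :
    i * (l - 1) + j < (t - 1) * (l - 1) + l - 2 := by
  have h1 : i + 1 ≤ t - 1 := hi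
  have h2 : (i + 1) * (l - 1) ≤ (t - 1) * (l - 1) := Nat.mul_le_mul_right _ h1
  have h3 : (i + 1) * (l - 1) = i * (l - 1) + (l - 1) := by ring
  rw [h3] at h2
  set a := i * (l - 1)
  set b := (t - 1) * (l - 1)
  omega

theorem btl_free_second_path (t l : ℕ) (ht : 1 ≤ t) (hl : 3 ≤ l) (n₁ : ℕ) (rest : List ℕ)
    (hsorted : (n₁ :: rest).Pairwise (· ≥ ·)) (hpos : ∀ m ∈ n₁ :: rest, 1 ≤ m)
    (hn₁ : n₁ = (t - 1) * (l - 1) + l - 2)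
    (hfree : ¬ ContainsSubgraph (bouquet t l)
      (graphJoin (⊥ : SimpleGraph Unit) (pathsUnion (n₁ :: rest)))) :
    ∀ m ∈ rest, m ≤ l - 2 := by
  intro m hm
  by_contra hm2
  push_neg at hm2
  obtain ⟨k, hk⟩ := List.get_of_mem hm
  apply hfree
  classical
  set L : List ℕ := n₁ :: rest with hL
  have hi0 : (0 : ℕ) < L.length := Nat.succ_pos _
  have hi1 : (k.val + 1 : ℕ) < L.length := by
    simp only [hL, List.length_cons]
    omega
  set i0 : Fin L.length := ⟨0, hi0⟩ with hi0def
  set i1 : Fin L.length := ⟨k.val + 1, hi1⟩ with hi1def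
  have hget0 : L.get i0 = n₁ := rfl
  have hgetk : L.get i1 = m := hk
  -- the map
  let f : Option (Fin t × Fin (l - 1)) →
      Unit ⊕ (Σ i : Fin L.length, Fin (L.get i)) := fun x =>
    match x with
    | none => Sum.inl ()
    | some (i, j) =>
        if h : i.val < t - 1 then
          Sum.inr ⟨i0, ⟨i.val * (l - 1) + j.val, by
            rw [hget0, hn₁]; exact bound1 t l i.val j.val hl h j.isLt⟩⟩
        else
          Sum.inr ⟨i1, ⟨j.val, by rw [hgetk]; have := j.isLt; omega⟩⟩
  have hmap : ∀ {a b}, (bouquet t l).Adj a b →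
      (graphJoin (⊥ : SimpleGraph Unit) (pathsUnion L)).Adj (f a) (f b) := by
    rintro (_ | ⟨i, j⟩) (_ | ⟨i', j'⟩) h
    · exact h.elim
    · -- none - some
      by_cases hc : i'.val < t - 1 <;>
        simp only [f, dif_pos, dif_neg, hc, dite_true, dite_false] <;> trivial
    · by_cases hc : i.val < t - 1 <;>
        simp only [f, dif_pos, dif_neg, hc, dite_true, dite_false] <;> trivial
    · obtain ⟨h1, h2⟩ := h
      have h1' : i = i' := h1
      subst h1'
      by_cases hc : i.val < t - 1
      · simp only [f, dif_pos hc]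
        show (pathsUnion L).Adj _ _
        refine ⟨rfl, ?_⟩
        set c := i.val * (l - 1)
        simp only [] at h2 ⊢
        omega
      · simp only [f, dif_neg hc]
        show (pathsUnion L).Adj _ _
        exact ⟨rfl, by simpa using h2⟩
  have hinj : Function.Injective f := by
    rintro (_ | ⟨i, j⟩) (_ | ⟨i', j'⟩) hfeq
    · rfl
    · by_cases hc : i'.val < t - 1 <;>
        simp only [f, dif_pos, dif_neg, hc, dite_true, dite_false] at hfeq <;>
        exact (Sum.inl_ne_inr hfeq).elim
    · by_cases hc : i.val < t - 1 <;>
        simp only [f, dif_pos, dif_neg, hc, dite_true, dite_false] at hfeq <;>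
        exact (Sum.inr_ne_inl hfeq).elim
    · by_cases hc : i.val < t - 1 <;> by_cases hc' : i'.val < t - 1 <;>
        simp only [f, dif_pos, dif_neg, hc, hc', dite_true, dite_false,
          Sum.inr.injEq, Sigma.mk.inj_iff, heq_eq_eq, Fin.mk.injEq, true_and] at hfeq
      · -- both in the long path
        obtain ⟨hij, hj⟩ := nat_mul_add_inj (l - 1) _ _ _ _ j.isLt j'.isLt hfeq
        have : i = i' := Fin.ext hij
        subst this
        have : j = j' := Fin.ext hj
        subst this
        rfl
      · -- i0 = i1 : contradiction
        have := congrArg Fin.val hfeq.1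
        simp [hi0def, hi1def] at this
      · have := congrArg Fin.val hfeq.1
        simp [hi0def, hi1def] at this
      · have : j = j' := Fin.ext hfeq
        subst this
        have hii : i = i' := Fin.ext (by have := i.isLt; have := i'.isLt; omega)
        subst hii
        rfl
  exact ⟨⟨f, hmap⟩, hinj⟩
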